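/- Block encoding of a banded circulant matrix via multi-controlled rotations (the construction of Camps et al.): let a₀ ∈ (0, 2] and a₁, a₋₁ ∈ [−1, 1], let A = a₀·I_N + a₁·S₊ + a₋₁·S₋, and set θ₀ = 2·arccos(a₀ − 1), θ₁ = 2·arccos(a₁), θ₂ = 2·arccos(a₋₁). On ℂ² ⊗ ℂ² ⊗ ℂ² ⊗ ℂ^N (ancilla qubits a, ℓ₀, ℓ₁ first, system register last) define R₀ = RY(θ₀) ⊗ (P₀ ⊗ P₀) ⊗ I_N + I₂ ⊗ (I₄ − P₀ ⊗ P₀) ⊗ I_N, R₁ = RY(θ₁) ⊗ (P₁ ⊗ P₀) ⊗ I_N + I₂ ⊗ (I₄ − P₁ ⊗ P₀) ⊗ I_N, R₂ = RY(θ₂) ⊗ (P₀ ⊗ P₁) ⊗ I_N + I₂ ⊗ (I₄ − P₀ ⊗ P₁) ⊗ I_N, C₋ = I₂ ⊗ I₂ ⊗ P₁ ⊗ S₋ + I₂ ⊗ I₂ ⊗ P₀ ⊗ I_N, C₊ = I₂ ⊗ P₁ ⊗ I₂ ⊗ S₊ + I₂ ⊗ P₀ ⊗ I₂ ⊗ I_N,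 and U = (I₂ ⊗ H ⊗ H ⊗ I_N) · C₊ · C₋ · R₂ · R₁ · R₀ · (I₂ ⊗ H ⊗ H ⊗ I_N). Then U block-encodes A with sub-normalization factor 1/4: for all j, k ∈ Fin N, U((0,0,0,j),(0,0,0,k)) = (1/4)·A_{jk}. -/
import Mathlib

open Matrix Kronecker

noncomputable section

/-- Cyclic shift matrix `S₊`: `(S₊)_{jk} = 1` iff `j ≡ k+1 (mod N)`. -/
def Sp (N : ℕ) [NeZero N] : Matrix (Fin N) (Fin N) ℂ :=
  Matrix.of fun j k => if j = k + 1 then 1 else 0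

/-- Cyclic shift matrix `S₋ = S₊ᵀ`. -/
def Sm (N : ℕ) [NeZero N] : Matrix (Fin N) (Fin N) ℂ := (Sp N)ᵀ

def P0 : Matrix (Fin 2) (Fin 2) ℂ := !![1, 0; 0, 0]
def P1 : Matrix (Fin 2) (Fin 2) ℂ := !![0, 0; 0, 1]
def Hg : Matrix (Fin 2) (Fin 2) ℂ := ((Real.sqrt 2 : ℝ) : ℂ)⁻¹ • !![1, 1; 1, -1]

/-- `RY(θ) = [[cos(θ/2), −sin(θ/2)], [sin(θ/2), cos(θ/2)]]`. -/
def RYm (θ : ℝ) : Matrix (Fin 2) (Fin 2) ℂ :=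
  !![(Real.cos (θ / 2) : ℂ), -(Real.sin (θ / 2) : ℂ);
     (Real.sin (θ / 2) : ℂ), (Real.cos (θ / 2) : ℂ)]

lemma Sp_mul_Sm (N : ℕ) [NeZero N] : Sp N * Sm N = 1 := by
  ext j k
  simp only [Matrix.mul_apply, Sp, Sm, Matrix.transpose_apply, Matrix.of_apply,
    Matrix.one_apply, ite_mul, one_mul, zero_mul]
  have h : ∀ l : Fin N, (j = l + 1) ↔ (l = j - 1) := fun l => by
    rw [eq_sub_iff_add_eq, eq_comm]
  simp only [h]
  rw [Finset.sum_ite_eq' Finset.univ (j-1) (fun l => if k = l + 1 then (1:ℂ) else 0)]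
  simp [sub_add_cancel, eq_comm]

lemma p00 : P0 * P0 = P0 := by
  ext i j; fin_cases i <;> fin_cases j <;> simp [P0, Matrix.mul_apply, Fin.sum_univ_two]
lemma p01 : P0 * P1 = 0 := by
  ext i j; fin_cases i <;> fin_cases j <;> simp [P0, P1, Matrix.mul_apply, Fin.sum_univ_two]
lemma p10 : P1 * P0 = 0 := by
  ext i j; fin_cases i <;> fin_cases j <;> simp [P0, P1, Matrix.mul_apply, Fin.sum_univ_two]
lemma p11 : P1 * P1 = P1 := by
  ext i j; fin_cases i <;> fin_cases j <;> simp [P1, Matrix.mul_apply, Fin.sum_univ_two]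
lemma P0_add_P1 : P0 + P1 = 1 := by
  ext i j; fin_cases i <;> fin_cases j <;> simp [P0, P1]

lemma m00 (X : Matrix (Fin 2) (Fin 2) ℂ) : X * P0 * P0 = X * P0 := by rw [mul_assoc, p00]
lemma m01 (X : Matrix (Fin 2) (Fin 2) ℂ) : X * P0 * P1 = 0 := by rw [mul_assoc, p01, mul_zero]
lemma m10 (X : Matrix (Fin 2) (Fin 2) ℂ) : X * P1 * P0 = 0 := by rw [mul_assoc, p10, mul_zero]
lemma m11 (X : Matrix (Fin 2) (Fin 2) ℂ) : X * P1 * P1 = X * P1 := by rw [mul_assoc, p11]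

lemma one4 : (1 : Matrix (Fin 2 × Fin 2) (Fin 2 × Fin 2) ℂ)
    = P0 ⊗ₖ P0 + P0 ⊗ₖ P1 + P1 ⊗ₖ P0 + P1 ⊗ₖ P1 := by
  rw [← Matrix.one_kronecker_one, ← P0_add_P1]
  simp only [Matrix.add_kronecker, Matrix.kronecker_add]
  abel
lemma sub00 : (1 : Matrix (Fin 2 × Fin 2) (Fin 2 × Fin 2) ℂ) - P0 ⊗ₖ P0
    = P0 ⊗ₖ P1 + P1 ⊗ₖ P0 + P1 ⊗ₖ P1 := by rw [one4]; abel
lemma sub10 : (1 : Matrix (Fin 2 × Fin 2) (Fin 2 × Fin 2) ℂ) - P1 ⊗ₖ P0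
    = P0 ⊗ₖ P0 + P0 ⊗ₖ P1 + P1 ⊗ₖ P1 := by rw [one4]; abel
lemma sub01 : (1 : Matrix (Fin 2 × Fin 2) (Fin 2 × Fin 2) ℂ) - P0 ⊗ₖ P1
    = P0 ⊗ₖ P0 + P1 ⊗ₖ P0 + P1 ⊗ₖ P1 := by rw [one4]; abel

lemma sqrt2sq : ((Real.sqrt 2 : ℝ) : ℂ) * ((Real.sqrt 2 : ℝ) : ℂ) = 2 := by
  norm_cast
  rw [Real.mul_self_sqrt]; norm_num

lemma eH0 : (Hg * P0 * Hg) 0 0 = 2⁻¹ := by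
  simp [Hg, P0, Matrix.mul_apply, Fin.sum_univ_two, Matrix.smul_apply]
  rw [← mul_inv, sqrt2sq]

lemma eH1 : (Hg * P1 * Hg) 0 0 = 2⁻¹ := by
  simp [Hg, P1, Matrix.mul_apply, Fin.sum_univ_two, Matrix.smul_apply]
  rw [← mul_inv, sqrt2sq]

lemma eRY (θ : ℝ) : RYm θ 0 0 = (Real.cos (θ/2) : ℂ) := by simp [RYm]

theorem stmt_5 (n : ℕ) (hn : 1 ≤ n) (N : ℕ) (hN : N = 2 ^ n) [NeZero N]
    (a0 a1 am1 : ℝ) (ha0 : a0 ∈ Set.Ioc (0 : ℝ) 2)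
    (ha1 : a1 ∈ Set.Icc (-1 : ℝ) 1) (ham1 : am1 ∈ Set.Icc (-1 : ℝ) 1)
    (A : Matrix (Fin N) (Fin N) ℂ)
    (hA : A = (a0 : ℂ) • (1 : Matrix (Fin N) (Fin N) ℂ) + (a1 : ℂ) • Sp N + (am1 : ℂ) • Sm N)
    (θ0 θ1 θ2 : ℝ)
    (htheta0 : θ0 = 2 * Real.arccos (a0 - 1))
    (htheta1 : θ1 = 2 * Real.arccos a1)
    (htheta2 : θ2 = 2 * Real.arccos am1)
    (R0 R1 R2 Cm Cp U :
      Matrix ((Fin 2 × (Fin 2 × Fin 2)) × Fin N) ((Fin 2 × (Fin 2 × Fin 2)) × Fin N) ℂ)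
    (hR0 : R0 = RYm θ0 ⊗ₖ (P0 ⊗ₖ P0) ⊗ₖ (1 : Matrix (Fin N) (Fin N) ℂ)
      + (1 : Matrix (Fin 2) (Fin 2) ℂ)
          ⊗ₖ ((1 : Matrix (Fin 2 × Fin 2) (Fin 2 × Fin 2) ℂ) - P0 ⊗ₖ P0)
          ⊗ₖ (1 : Matrix (Fin N) (Fin N) ℂ))
    (hR1 : R1 = RYm θ1 ⊗ₖ (P1 ⊗ₖ P0) ⊗ₖ (1 : Matrix (Fin N) (Fin N) ℂ)
      + (1 : Matrix (Fin 2) (Fin 2) ℂ)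
          ⊗ₖ ((1 : Matrix (Fin 2 × Fin 2) (Fin 2 × Fin 2) ℂ) - P1 ⊗ₖ P0)
          ⊗ₖ (1 : Matrix (Fin N) (Fin N) ℂ))
    (hR2 : R2 = RYm θ2 ⊗ₖ (P0 ⊗ₖ P1) ⊗ₖ (1 : Matrix (Fin N) (Fin N) ℂ)
      + (1 : Matrix (Fin 2) (Fin 2) ℂ)
          ⊗ₖ ((1 : Matrix (Fin 2 × Fin 2) (Fin 2 × Fin 2) ℂ) - P0 ⊗ₖ P1)
          ⊗ₖ (1 : Matrix (Fin N) (Fin N) ℂ))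
    (hCm : Cm = (1 : Matrix (Fin 2) (Fin 2) ℂ)
          ⊗ₖ ((1 : Matrix (Fin 2) (Fin 2) ℂ) ⊗ₖ P1) ⊗ₖ Sm N
      + (1 : Matrix (Fin 2) (Fin 2) ℂ)
          ⊗ₖ ((1 : Matrix (Fin 2) (Fin 2) ℂ) ⊗ₖ P0) ⊗ₖ (1 : Matrix (Fin N) (Fin N) ℂ))
    (hCp : Cp = (1 : Matrix (Fin 2) (Fin 2) ℂ)
          ⊗ₖ (P1 ⊗ₖ (1 : Matrix (Fin 2) (Fin 2) ℂ)) ⊗ₖ Sp N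
      + (1 : Matrix (Fin 2) (Fin 2) ℂ)
          ⊗ₖ (P0 ⊗ₖ (1 : Matrix (Fin 2) (Fin 2) ℂ)) ⊗ₖ (1 : Matrix (Fin N) (Fin N) ℂ))
    (hU : U = ((1 : Matrix (Fin 2) (Fin 2) ℂ) ⊗ₖ (Hg ⊗ₖ Hg) ⊗ₖ (1 : Matrix (Fin N) (Fin N) ℂ))
      * Cp * Cm * R2 * R1 * R0
      * ((1 : Matrix (Fin 2) (Fin 2) ℂ) ⊗ₖ (Hg ⊗ₖ Hg) ⊗ₖ (1 : Matrix (Fin N) (Fin N) ℂ))) :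
    ∀ j k : Fin N, U ((0, (0, 0)), j) ((0, (0, 0)), k) = (1 / 4 : ℂ) * A j k := by
  intro j k
  subst hA hU hR0 hR1 hR2 hCm hCp htheta0 htheta1 htheta2
  rw [sub00, sub10, sub01]
  simp only [Matrix.add_kronecker, Matrix.kronecker_add, Matrix.add_mul, Matrix.mul_add,
    ← Matrix.mul_kronecker_mul, Matrix.one_mul, Matrix.mul_one, m00, m01, m10, m11,
    Matrix.zero_mul, Matrix.mul_zero, Matrix.zero_kronecker, Matrix.kronecker_zero,
    add_zero, zero_add, Sp_mul_Sm]
  have hc0 : Real.cos (2 * Real.arccos (a0 - 1) / 2) = a0 - 1 := by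
    rw [mul_div_cancel_left₀ _ two_ne_zero]
    exact Real.cos_arccos (by linarith [ha0.1]) (by linarith [ha0.2])
  have hc1 : Real.cos (2 * Real.arccos a1 / 2) = a1 := by
    rw [mul_div_cancel_left₀ _ two_ne_zero]
    exact Real.cos_arccos ha1.1 ha1.2
  have hc2 : Real.cos (2 * Real.arccos am1 / 2) = am1 := by
    rw [mul_div_cancel_left₀ _ two_ne_zero]
    exact Real.cos_arccos ham1.1 ham1.2
  simp only [Matrix.add_apply, Matrix.kroneckerMap_apply, Matrix.smul_apply, Prod.fst, Prod.snd,
    Matrix.one_apply_eq, eH0, eH1, eRY, hc0, hc1, hc2, smul_eq_mul]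
  push_cast
  ring
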